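/- Let (X, d) be a complete metric space and let φ : X → ℝ ∪ {+∞} be a proper lower semicontinuous function. Then the set of points at which φ is calm from below, i.e. {x ∈ dom φ : gr↓φ(x) > −∞}, is dense in dom φ. -/

import Mathlib

open Filter Topology Metric Set

/-- The steepest descent rate of an extended-real-valued function `φ` at `xb`:
`liminf_{x → xb, x ≠ xb} (φ x − φ xb) / d(x, xb)`
(quotient written as product with the inverse of the positive real `d(x, xb)`). -/
noncomputable def steepestDescentRate {X : Type*} [MetricSpace X]
    (φ : X → EReal) (xb : X) : EReal :=
  Filter.liminf (fun x => (φ x - φ xb) * (((dist x xb)⁻¹ : ℝ) : EReal)) (𝓝[≠] xb)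

/-- For a proper lower semicontinuous function
`φ : X → ℝ ∪ {+∞}` on a complete metric space, the set of points of `dom φ` at which
`φ` is calm from below (i.e. has steepest descent rate `> −∞`) is dense in `dom φ`. -/
theorem ekeland_ball {X : Type*} [MetricSpace X] [CompleteSpace X]
    (g : X → ℝ) (hg : LowerSemicontinuous g) (x₀ : X) (δ : ℝ) (hδ : 0 < δ)
    (c : ℝ) (hc : ∀ y ∈ closedBall x₀ δ, c ≤ g y) (α : ℝ) (hα : 0 < α) :
    ∃ xb ∈ closedBall x₀ δ, g xb ≤ g x₀ ∧ dist xb x₀ ≤ (g x₀ - c) / α ∧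
      ∀ y ∈ closedBall x₀ δ, g xb ≤ g y + α * dist y xb := by
  set B := closedBall x₀ δ with hB
  have hx₀B : x₀ ∈ B := mem_closedBall_self hδ.le
  set F : X → Set X := fun x => {y ∈ B | g y + α * dist y x ≤ g x} with hF
  have hFB : ∀ x, F x ⊆ B := fun x y hy => hy.1
  have hself : ∀ x ∈ B, x ∈ F x := by
    intro x hx
    refine ⟨hx, ?_⟩
    simp
  have hFg : ∀ x, ∀ y ∈ F x, g y ≤ g x := by
    intro x y hy
    nlinarith [hy.2, dist_nonneg (x := y) (y := x)]
  have htrans : ∀ x, ∀ y ∈ F x, F y ⊆ F x := by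
    intro x y hy z hz
    refine ⟨hz.1, ?_⟩
    have h1 := hy.2
    have h2 := hz.2
    have h3 := dist_triangle z y x
    nlinarith
  have hbdd : ∀ x, BddBelow (g '' F x) := by
    intro x
    exact ⟨c, fun r ⟨y, hy, hyr⟩ => hyr ▸ hc y (hFB x hy)⟩
  have step : ∀ (n : ℕ) (x : X), x ∈ B →
      ∃ y, y ∈ F x ∧ g y ≤ sInf (g '' F x) + (1/2 : ℝ) ^ n := by
    intro n x hx
    have hne : (g '' F x).Nonempty := ⟨g x, x, hself x hx, rfl⟩
    obtain ⟨r, ⟨y, hy, rfl⟩, hr⟩ := Real.lt_sInf_add_pos hne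
      (by positivity : (0:ℝ) < (1/2 : ℝ) ^ n)
    exact ⟨y, hy, hr.le⟩
  choose! f hf1 hf2 using step
  set u : ℕ → X := fun n => Nat.rec x₀ (fun n x => f n x) n with hu
  have husucc : ∀ n, u (n+1) = f n (u n) := fun n => rfl
  have huB : ∀ n, u n ∈ B := by
    intro n
    induction n with
    | zero => exact hx₀B
    | succ n ih => exact hFB _ (hf1 n (u n) ih)
  have hstep1 : ∀ n, u (n+1) ∈ F (u n) := fun n => hf1 n (u n) (huB n)
  have hstep2 : ∀ n, g (u (n+1)) ≤ sInf (g '' F (u n)) + (1/2 : ℝ) ^ n :=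
    fun n => hf2 n (u n) (huB n)
  have hmem : ∀ m n, n ≤ m → u m ∈ F (u n) := by
    intro m
    induction m with
    | zero =>
      intro n h
      simpa [Nat.le_zero.mp h] using hself _ (huB 0)
    | succ m ih =>
      intro n h
      rcases Nat.lt_or_ge n (m+1) with h' | h'
      · exact htrans _ _ (ih n (Nat.lt_succ_iff.mp h')) (hstep1 m)
      · have : n = m + 1 := le_antisymm h h'
        subst this
        exact hself _ (huB (m+1))
  -- the values g (u n)
  set r : ℕ → ℝ := fun n => g (u n) with hr
  have hrc : ∀ n, c ≤ r n := fun n => hc _ (huB n)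
  have hrant : Antitone r := by
    apply antitone_nat_of_succ_le
    intro n
    exact hFg _ _ (hstep1 n)
  have hdistr : ∀ m n, n ≤ m → α * dist (u m) (u n) ≤ r n - r m := by
    intro m n h
    have := (hmem m n h).2
    linarith
  -- convergence of r
  have hrbdd : BddBelow (Set.range r) := ⟨c, fun x ⟨n, hn⟩ => hn ▸ hrc n⟩
  set L : ℝ := ⨅ n, r n with hL
  have hrL : Tendsto r atTop (𝓝 L) := tendsto_atTop_ciInf hrant hrbdd
  have hLr : ∀ n, L ≤ r n := fun n => ciInf_le hrbdd n
  -- u is Cauchy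
  have hcauchy : CauchySeq u := by
    refine cauchySeq_of_le_tendsto_0 (fun N => (r N - L) / α) ?_ ?_
    · intro n m N hn hm
      rcases le_total n m with h | h
      · rw [dist_comm]
        have h1 := hdistr m n h
        have h2 := hrant hn
        have h3 := hLr m
        show dist (u m) (u n) ≤ (r N - L) / α
        rw [le_div_iff₀ hα]
        nlinarith
      · have h1 := hdistr n m h
        have h2 := hrant hm
        have h3 := hLr n
        show dist (u n) (u m) ≤ (r N - L) / α
        rw [le_div_iff₀ hα]
        nlinarith
    · have : Tendsto (fun N => (r N - L) / α) atTop (𝓝 ((L - L)/α)) :=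
        Tendsto.div_const (hrL.sub_const L) α
      simpa using this
  obtain ⟨xb, hxb⟩ := cauchySeq_tendsto_of_complete hcauchy
  have hxbB : xb ∈ B := isClosed_closedBall.mem_of_tendsto hxb (Eventually.of_forall huB)
  -- g xb ≤ L
  have hgxbL : g xb ≤ L := by
    by_contra h
    push_neg at h
    set b := (L + g xb) / 2 with hb
    have hb1 : b < g xb := by simp [hb]; linarith
    have hb2 : L < b := by simp [hb]; linarith
    have hev : ∀ᶠ m in atTop, b < r m :=
      hxb.eventually (hg xb b hb1)
    have : b ≤ L := ge_of_tendsto hrL (hev.mono fun m hm => hm.le)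
    linarith
  -- xb ∈ F (u n) for each n
  have hxbF : ∀ n, xb ∈ F (u n) := by
    intro n
    refine ⟨hxbB, ?_⟩
    have hlim : Tendsto (fun m => r n - α * dist (u m) (u n)) atTop
        (𝓝 (r n - α * dist xb (u n))) := by
      exact (tendsto_const_nhds.sub
        ((((hxb.dist tendsto_const_nhds)).const_mul α)))
    have hle : L ≤ r n - α * dist xb (u n) := by
      refine le_of_tendsto_of_tendsto hrL hlim ?_
      filter_upwards [eventually_ge_atTop n] with m hm
      have := hdistr m n hm
      show r m ≤ r n - α * dist (u m) (u n)
      linarith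
    linarith [hgxbL]
  -- the key minimality: F xb = {xb}
  have hFxb : ∀ y ∈ F xb, y = xb := by
    intro y hy
    have hyF : ∀ n, y ∈ F (u n) := fun n => htrans _ _ (hxbF n) hy
    have hdy : ∀ n, α * dist y (u (n+1)) ≤ (1/2 : ℝ) ^ n := by
      intro n
      have h1 : sInf (g '' F (u n)) ≤ g y :=
        csInf_le (hbdd _) ⟨y, hyF n, rfl⟩
      have h2 := hstep2 n
      have h3 := (hyF (n+1)).2
      linarith
    have : Tendsto (fun n => dist y (u (n+1))) atTop (𝓝 (dist y xb)) :=
      (tendsto_const_nhds.dist (hxb.comp (tendsto_add_atTop_nat 1)))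
    have hdlim : Tendsto (fun n => dist (u (n+1)) xb) atTop (𝓝 0) := by
      have := ((hxb.comp (tendsto_add_atTop_nat 1)).dist
        (tendsto_const_nhds (x := xb)))
      simpa using this
    have hrhs : Tendsto (fun n => (1/2:ℝ)^n / α + dist (u (n+1)) xb) atTop
        (𝓝 (0 / α + 0)) := by
      exact Tendsto.add ((tendsto_pow_atTop_nhds_zero_of_lt_one (by norm_num)
        (by norm_num)).div_const α) hdlim
    have hd0 : dist y xb ≤ 0 / α + 0 := by
      refine ge_of_tendsto hrhs (Eventually.of_forall fun n => ?_)
      have h1 := hdy n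
      have h2 := dist_triangle y (u (n+1)) xb
      have h3 : dist y (u (n+1)) ≤ (1/2:ℝ)^n / α := by
        rw [le_div_iff₀ hα]; nlinarith
      linarith
    have : dist y xb ≤ 0 := by
      simpa using hd0
    exact dist_le_zero.mp this
  have hu0 : u 0 = x₀ := rfl
  refine ⟨xb, hxbB, ?_, ?_, ?_⟩
  · have := (hxbF 0).2
    rw [hu0] at this
    have h0 : 0 ≤ α * dist xb x₀ := mul_nonneg hα.le dist_nonneg
    linarith
  · rw [le_div_iff₀ hα]
    have hcx : c ≤ g xb := hc _ hxbB
    have h2 := (hxbF 0).2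
    rw [hu0] at h2
    nlinarith [dist_nonneg (x := xb) (y := x₀)]
  · intro y hyB
    by_contra hcon
    push_neg at hcon
    have hyF : y ∈ F xb := ⟨hyB, hcon.le⟩
    have := hFxb y hyF
    subst this
    simp at hcon

theorem dense_calm_from_below {X : Type*} [MetricSpace X] [CompleteSpace X]
    (φ : X → EReal) (hnbot : ∀ x, φ x ≠ ⊥) (hproper : ∃ x, φ x ≠ ⊤)
    (hlsc : LowerSemicontinuous φ) :
    {x | φ x ≠ ⊤} ⊆
      closure {x | φ x ≠ ⊤ ∧ ⊥ < steepestDescentRate φ x} := by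
  intro x₀ hx₀
  simp only [mem_setOf_eq] at hx₀
  rw [Metric.mem_closure_iff]
  intro ε hε
  set a : ℝ := (φ x₀).toReal with ha
  have hφx₀ : φ x₀ = (a : EReal) := (EReal.coe_toReal hx₀ (hnbot x₀)).symm
  set c : ℝ := a - 1 with hcdef
  set M : ℝ := a + 1 with hMdef
  -- ψ and g
  set ψ : X → EReal := fun x => min (φ x) (M : EReal) with hψdef
  have hψbot : ∀ x, ψ x ≠ ⊥ := by
    intro x h
    rcases min_eq_bot.mp h with h' | h'
    · exact hnbot x h'
    · exact EReal.coe_ne_bot M h'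
  have hψtop : ∀ x, ψ x ≠ ⊤ := by
    intro x
    exact ne_top_of_le_ne_top (EReal.coe_ne_top M) (min_le_right _ _)
  set g : X → ℝ := fun x => (ψ x).toReal with hgdef
  have hψg : ∀ x, ψ x = (g x : EReal) := fun x =>
    (EReal.coe_toReal (hψtop x) (hψbot x)).symm
  have hψlsc : LowerSemicontinuous ψ := by
    intro x b hb
    have hb1 : b < φ x := lt_of_lt_of_le hb (min_le_left _ _)
    have hb2 : b < (M : EReal) := lt_of_lt_of_le hb (min_le_right _ _)
    filter_upwards [hlsc x b hb1] with y hy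
    exact lt_min hy hb2
  have hglsc : LowerSemicontinuous g := by
    intro x b hb
    have hb' : (b : EReal) < ψ x := by
      rw [hψg x]; exact_mod_cast hb
    filter_upwards [hψlsc x b hb'] with y hy
    rw [hψg y] at hy
    exact_mod_cast hy
  have hgx₀ : g x₀ = a := by
    have : ψ x₀ = (a : EReal) := by
      show min (φ x₀) (M : EReal) = (a : EReal)
      rw [hφx₀]
      exact min_eq_left (by exact_mod_cast (by linarith : a ≤ M))
    rw [hgdef]
    simp [this]
  -- find δ from lsc of φ
  have hca : (c : EReal) < φ x₀ := by
    rw [hφx₀]; exact_mod_cast (by linarith : c < a)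
  obtain ⟨δ', hδ', hball⟩ := Metric.eventually_nhds_iff.mp (hlsc x₀ c hca)
  set δ : ℝ := min (ε / 2) (δ' / 2) with hδdef
  have hδpos : 0 < δ := lt_min (by linarith) (by linarith)
  have hcg : ∀ y ∈ closedBall x₀ δ, c ≤ g y := by
    intro y hy
    have hyd : dist y x₀ < δ' := by
      have := mem_closedBall.mp hy
      have : δ ≤ δ' / 2 := min_le_right _ _
      calc dist y x₀ ≤ δ := mem_closedBall.mp hy
        _ ≤ δ' / 2 := min_le_right _ _
        _ < δ' := by linarith
    have h1 : (c : EReal) < φ y := hball hyd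
    have h2 : (c : EReal) ≤ ψ y := by
      rw [hψdef]
      exact le_min h1.le (by exact_mod_cast (by linarith : c ≤ M))
    rw [hψg y] at h2
    exact_mod_cast h2
  set α : ℝ := 2 / δ with hαdef
  have hαpos : 0 < α := by positivity
  obtain ⟨xb, hxbB, hgle, hdist, hkey⟩ :=
    ekeland_ball g hglsc x₀ δ hδpos c hcg α hαpos
  have hdist' : dist xb x₀ ≤ δ / 2 := by
    have : (g x₀ - c) / α = δ / 2 := by
      rw [hgx₀, hcdef, hαdef]
      field_simp
      ring
    linarith [hdist.trans_eq this]
  -- φ xb is finite and equals g xb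
  have hφxb : φ xb = (g xb : EReal) := by
    have hlt : ψ xb < (M : EReal) := by
      rw [hψg xb]
      exact_mod_cast (by rw [hgx₀] at hgle; linarith [hgle] : g xb < M)
    have : φ xb < (M : EReal) := by
      by_contra h
      push_neg at h
      rw [hψdef] at hlt
      simp only [min_eq_right h] at hlt
      exact lt_irrefl _ hlt
    rw [← hψg xb]
    exact (min_eq_left this.le).symm
  have hφxbtop : φ xb ≠ ⊤ := by
    rw [hφxb]; exact EReal.coe_ne_top _
  refine ⟨xb, ⟨hφxbtop, ?_⟩, ?_⟩
  · -- calmness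
    have hrate : ((-α : ℝ) : EReal) ≤ steepestDescentRate φ xb := by
      unfold steepestDescentRate
      refine Filter.le_liminf_of_le (by isBoundedDefault) ?_
      have hρ : 0 < δ - dist xb x₀ := by linarith
      have hmem : ∀ᶠ y in 𝓝[≠] xb, y ∈ ball xb (δ - dist xb x₀) ∧ y ≠ xb := by
        filter_upwards [inter_mem_nhdsWithin {xb}ᶜ
          (ball_mem_nhds xb hρ)] with y hy
        exact ⟨hy.2, hy.1⟩
      filter_upwards [hmem] with y ⟨hyball, hyne⟩
      have hyB : y ∈ closedBall x₀ δ := by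
        rw [mem_closedBall]
        have := mem_ball.mp hyball
        calc dist y x₀ ≤ dist y xb + dist xb x₀ := dist_triangle _ _ _
          _ ≤ δ := by linarith
      have hd0 : dist y xb ≠ 0 := dist_ne_zero.mpr hyne
      have hdpos : 0 < dist y xb := dist_pos.mpr hyne
      -- φ y - φ xb ≥ -α * dist y xb
      have h1 : ((g y - g xb : ℝ) : EReal) ≤ φ y - φ xb := by
        rw [hφxb, EReal.coe_sub]
        exact EReal.sub_le_sub (by rw [← hψg y]; exact min_le_left _ _) le_rfl
      have h2 : ((-α * dist y xb : ℝ) : EReal) ≤ φ y - φ xb := by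
        refine le_trans ?_ h1
        exact_mod_cast (by linarith [hkey y hyB] : -α * dist y xb ≤ g y - g xb)
      have h3 : ((-α * dist y xb : ℝ) : EReal) * (((dist y xb)⁻¹ : ℝ) : EReal)
          ≤ (φ y - φ xb) * (((dist y xb)⁻¹ : ℝ) : EReal) :=
        mul_le_mul_of_nonneg_right h2 (by exact_mod_cast inv_nonneg.mpr dist_nonneg)
      refine le_trans (le_of_eq ?_) h3
      rw [← EReal.coe_mul]
      congr 1
      field_simp
    exact lt_of_lt_of_le (by exact_mod_cast EReal.bot_lt_coe (-α)) hrate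
  · -- distance
    rw [dist_comm]
    calc dist xb x₀ ≤ δ / 2 := hdist'
      _ < ε := by
        have : δ ≤ ε / 2 := min_le_left _ _
        linarith
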